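/- If x ∈ 𝔟 is diagonalizable, then there exists g ∈ B such that g·x·g⁻¹ ∈ 𝔱; that is, every semisimple element of the Borel subalgebra 𝔟 is B-conjugate to an element of 𝔱. -/

import Mathlib

open Matrix

/-- The Gram matrix `J = [[0, 1ₙ], [1ₙ, 0]]` of the symplectic form. -/
def Jsp (k : Type*) [Field k] (n : ℕ) : Matrix (Fin n ⊕ Fin n) (Fin n ⊕ Fin n) k :=
  Matrix.fromBlocks 0 1 1 0

section Aux

variable {k : Type*} [Field k]


/-- Key semisimplicity-derived property: for every scalar `α`,
`(M - α)² v = 0` implies `(M - α) v = 0`. -/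
def Dz {ι : Type*} [Fintype ι] [DecidableEq ι] (M : Matrix ι ι k) : Prop :=
  ∀ (α : k) (v : ι → k),
    (M - α • 1).mulVec ((M - α • 1).mulVec v) = 0 → (M - α • 1).mulVec v = 0

lemma diagonal_sub_smul_one {ι : Type*} [Fintype ι] [DecidableEq ι] (d : ι → k) (α : k) :
    Matrix.diagonal d - α • (1 : Matrix ι ι k) = Matrix.diagonal (fun i => d i - α) := by
  rw [Matrix.smul_one_eq_diagonal, ← Matrix.diagonal_sub]

lemma dz_diagonal {ι : Type*} [Fintype ι] [DecidableEq ι] (d : ι → k) :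
    Dz (Matrix.diagonal d) := by
  intro α v hv
  rw [diagonal_sub_smul_one] at hv ⊢
  funext i
  have := congrFun hv i
  simp only [Matrix.mulVec_diagonal, Pi.zero_apply] at this ⊢
  rcases eq_or_ne (d i - α) 0 with h0 | h0
  · simp [h0]
  · have := mul_left_cancel₀ h0 (this.trans (mul_zero (d i - α)).symm)
    simpa using this

lemma mulVec_eq_zero_of_isUnit {ι : Type*} [Fintype ι] [DecidableEq ι]
    {g : Matrix ι ι k} (hg : IsUnit g) {w : ι → k} (h : g.mulVec w = 0) : w = 0 := by
  have hdet := (Matrix.isUnit_iff_isUnit_det g).mp hg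
  calc w = (g⁻¹ * g).mulVec w := by rw [Matrix.nonsing_inv_mul g hdet, Matrix.one_mulVec]
    _ = g⁻¹.mulVec (g.mulVec w) := (Matrix.mulVec_mulVec w g⁻¹ g).symm
    _ = 0 := by rw [h, Matrix.mulVec_zero]

/-- `Dz` transfers along an intertwiner `g * M' = M * g` with `g` a unit. -/
lemma dz_of_mul_eq {ι : Type*} [Fintype ι] [DecidableEq ι]
    {M M' g : Matrix ι ι k} (hM : Dz M) (hg : IsUnit g) (h : g * M' = M * g) : Dz M' := by
  intro α v hv
  have hN : g * (M' - α • 1) = (M - α • 1) * g := by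
    rw [mul_sub, sub_mul, h, mul_smul_comm, smul_mul_assoc, mul_one, one_mul]
  have key : ∀ w : ι → k, g.mulVec ((M' - α • 1).mulVec w)
      = (M - α • 1).mulVec (g.mulVec w) := by
    intro w
    rw [Matrix.mulVec_mulVec, Matrix.mulVec_mulVec, hN]
  have h2 : (M - α • 1).mulVec ((M - α • 1).mulVec (g.mulVec v)) = 0 := by
    rw [← key, ← key, hv, Matrix.mulVec_zero]
  have h3 := hM α (g.mulVec v) h2
  rw [← key] at h3
  exact mulVec_eq_zero_of_isUnit hg h3

lemma dz_of_mul_eq' {ι : Type*} [Fintype ι] [DecidableEq ι]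
    {M M' g : Matrix ι ι k} (hM : Dz M) (hg : IsUnit g) (h : M' * g = g * M) : Dz M' := by
  have hdet := (Matrix.isUnit_iff_isUnit_det g).mp hg
  apply dz_of_mul_eq hM ((Matrix.isUnit_nonsing_inv_iff).mpr hg)
  calc g⁻¹ * M' = g⁻¹ * M' * (g * g⁻¹) := by rw [Matrix.mul_nonsing_inv g hdet, mul_one]
    _ = g⁻¹ * (M' * g) * g⁻¹ := by simp only [mul_assoc]
    _ = g⁻¹ * (g * M) * g⁻¹ := by rw [h]
    _ = (g⁻¹ * g) * (M * g⁻¹) := by rw [mul_assoc, mul_assoc, mul_assoc]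
    _ = M * g⁻¹ := by rw [Matrix.nonsing_inv_mul g hdet, one_mul]


/-- Build an `(m+1)×(m+1)` matrix `[[A, c],[0, α]]` from an `m×m` block `A`,
a last column `c` and a corner entry `α`. -/
def corner {m : ℕ} (A : Matrix (Fin m) (Fin m) k) (c : Fin m → k) (α : k) :
    Matrix (Fin (m + 1)) (Fin (m + 1)) k :=
  Matrix.of (Fin.snoc (fun i => Fin.snoc (A i) (c i)) (Fin.snoc 0 α))

@[simp] lemma corner_cc {m : ℕ} (A : Matrix (Fin m) (Fin m) k) (c : Fin m → k) (α : k)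
    (i j : Fin m) : corner A c α i.castSucc j.castSucc = A i j := by
  simp [corner]

@[simp] lemma corner_cl {m : ℕ} (A : Matrix (Fin m) (Fin m) k) (c : Fin m → k) (α : k)
    (i : Fin m) : corner A c α i.castSucc (Fin.last m) = c i := by
  simp [corner]

@[simp] lemma corner_lc {m : ℕ} (A : Matrix (Fin m) (Fin m) k) (c : Fin m → k) (α : k)
    (j : Fin m) : corner A c α (Fin.last m) j.castSucc = 0 := by
  simp [corner]

@[simp] lemma corner_ll {m : ℕ} (A : Matrix (Fin m) (Fin m) k) (c : Fin m → k) (α : k) :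
    corner A c α (Fin.last m) (Fin.last m) = α := by
  simp [corner]

lemma corner_mul {m : ℕ} (A B : Matrix (Fin m) (Fin m) k) (c d : Fin m → k) (α β : k) :
    corner A c α * corner B d β = corner (A * B) (A.mulVec d + β • c) (α * β) := by
  ext i j
  induction i using Fin.lastCases with
  | last =>
    induction j using Fin.lastCases with
    | last => simp [Matrix.mul_apply, Fin.sum_univ_castSucc]
    | cast j => simp [Matrix.mul_apply, Fin.sum_univ_castSucc]
  | cast i =>
    induction j using Fin.lastCases with
    | last => simp [Matrix.mul_apply, Fin.sum_univ_castSucc, Matrix.mulVec, dotProduct,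
        mul_comm]
    | cast j => simp [Matrix.mul_apply, Fin.sum_univ_castSucc]

lemma corner_sub {m : ℕ} (A B : Matrix (Fin m) (Fin m) k) (c d : Fin m → k) (α β : k) :
    corner A c α - corner B d β = corner (A - B) (c - d) (α - β) := by
  ext i j
  induction i using Fin.lastCases with
  | last => induction j using Fin.lastCases with
    | last => simp
    | cast j => simp
  | cast i => induction j using Fin.lastCases with
    | last => simp
    | cast j => simp

lemma corner_one {m : ℕ} : (1 : Matrix (Fin (m + 1)) (Fin (m + 1)) k) = corner 1 0 1 := by
  ext i j
  induction i using Fin.lastCases with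
  | last => induction j using Fin.lastCases with
    | last => simp
    | cast j => simp [Matrix.one_apply, (Fin.castSucc_lt_last j).ne']
  | cast i => induction j using Fin.lastCases with
    | last => simp [Matrix.one_apply, (Fin.castSucc_lt_last i).ne]
    | cast j => simp [Matrix.one_apply, Fin.castSucc_inj]

lemma corner_smul {m : ℕ} (s : k) (A : Matrix (Fin m) (Fin m) k) (c : Fin m → k) (α : k) :
    s • corner A c α = corner (s • A) (s • c) (s * α) := by
  ext i j
  induction i using Fin.lastCases with
  | last => induction j using Fin.lastCases with
    | last => simp
    | cast j => simp
  | cast i => induction j using Fin.lastCases with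
    | last => simp
    | cast j => simp

lemma corner_mulVec {m : ℕ} (A : Matrix (Fin m) (Fin m) k) (c : Fin m → k) (α : k)
    (v : Fin m → k) (β : k) :
    (corner A c α).mulVec (Fin.snoc v β) = Fin.snoc (A.mulVec v + β • c) (α * β) := by
  funext i
  induction i using Fin.lastCases with
  | last => simp [Matrix.mulVec, dotProduct, Fin.sum_univ_castSucc]
  | cast i => simp [Matrix.mulVec, dotProduct, Fin.sum_univ_castSucc, mul_comm]

lemma snoc_zero {m : ℕ} : (Fin.snoc 0 0 : Fin (m + 1) → k) = 0 := by
  funext i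
  induction i using Fin.lastCases with
  | last => simp
  | cast i => simp

lemma eq_corner {m : ℕ} (a : Matrix (Fin (m + 1)) (Fin (m + 1)) k)
    (ha : ∀ j : Fin m, a (Fin.last m) j.castSucc = 0) :
    a = corner (a.submatrix Fin.castSucc Fin.castSucc)
      (fun i => a i.castSucc (Fin.last m)) (a (Fin.last m) (Fin.last m)) := by
  ext i j
  induction i using Fin.lastCases with
  | last => induction j using Fin.lastCases with
    | last => simp
    | cast j => simp [ha j]
  | cast i => induction j using Fin.lastCases with
    | last => simp
    | cast j => simp

lemma diagonal_corner {m : ℕ} (f : Fin (m + 1) → k) :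
    Matrix.diagonal f
      = corner (Matrix.diagonal (fun i : Fin m => f i.castSucc)) 0 (f (Fin.last m)) := by
  ext i j
  induction i using Fin.lastCases with
  | last => induction j using Fin.lastCases with
    | last => simp
    | cast j => simp [Matrix.diagonal_apply_ne _ (Fin.castSucc_lt_last j).ne']
  | cast i => induction j using Fin.lastCases with
    | last => simp [Matrix.diagonal_apply_ne _ (Fin.castSucc_lt_last i).ne]
    | cast j => simp [Matrix.diagonal_apply, Fin.castSucc_inj]

lemma isUnit_of_uppertri {m : ℕ} (p : Matrix (Fin m) (Fin m) k)
    (hu : ∀ i j : Fin m, (j : ℕ) < (i : ℕ) → p i j = 0) (hd : ∀ i, p i i = 1) :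
    IsUnit p := by
  rw [Matrix.isUnit_iff_isUnit_det]
  have hbt : p.BlockTriangular id := fun i j hij => hu i j hij
  rw [Matrix.det_of_upperTriangular hbt]
  simp [hd]

/-- An upper triangular matrix satisfying `Dz` is conjugate to its diagonal by a
unipotent upper triangular matrix. -/
theorem tri_diag : ∀ (m : ℕ) (a : Matrix (Fin m) (Fin m) k),
    (∀ i j : Fin m, (j : ℕ) < (i : ℕ) → a i j = 0) → Dz a →
    ∃ p : Matrix (Fin m) (Fin m) k,
      (∀ i j : Fin m, (j : ℕ) < (i : ℕ) → p i j = 0) ∧ (∀ i, p i i = 1) ∧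
      p * a = Matrix.diagonal (fun i => a i i) * p := by
  intro m
  induction m with
  | zero =>
    intro a _ _
    exact ⟨1, by intro i; exact i.elim0, by intro i; exact i.elim0,
      by ext i j; exact i.elim0⟩
  | succ m ih =>
    intro a ha hDa
    classical
    set a' := a.submatrix Fin.castSucc Fin.castSucc with ha'def
    set c : Fin m → k := fun i => a i.castSucc (Fin.last m) with hcdef
    set α := a (Fin.last m) (Fin.last m) with hαdef
    have hacorner : a = corner a' c α :=
      eq_corner a (fun j => ha _ _ (by simpa using j.isLt))
    have ha'u : ∀ i j : Fin m, (j : ℕ) < (i : ℕ) → a' i j = 0 :=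
      fun i j hij => ha _ _ (by simpa using hij)
    have hDa' : Dz a' := by
      intro β v hv
      have hsub : a - β • 1 = corner (a' - β • 1) c (α - β) := by
        rw [hacorner, corner_one, corner_smul, corner_sub]
        simp
      have lift : ∀ w : Fin m → k,
          (a - β • 1).mulVec (Fin.snoc w 0) = Fin.snoc ((a' - β • 1).mulVec w) 0 := by
        intro w
        rw [hsub, corner_mulVec]
        simp
      have h2 : (a - β • 1).mulVec ((a - β • 1).mulVec (Fin.snoc v 0)) = 0 := by
        rw [lift v, lift _, hv, snoc_zero]
      have h3 := hDa β (Fin.snoc v 0) h2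
      rw [lift v] at h3
      funext i
      have := congrFun h3 i.castSucc
      simpa using this
    obtain ⟨p', hp'u, hp'd, hp'e⟩ := ih a' ha'u hDa'
    set t : Fin m → k := fun i => a' i i with htdef
    set e : Fin m → k := p'.mulVec c with hedef
    set P : Matrix (Fin (m + 1)) (Fin (m + 1)) k := corner p' 0 1 with hPdef
    have hPu : IsUnit P := by
      apply isUnit_of_uppertri
      · intro i j hij
        induction i using Fin.lastCases with
        | last =>
          induction j using Fin.lastCases with
          | last => simp at hij
          | cast j => rw [hPdef, corner_lc]
        | cast i =>
          induction j using Fin.lastCases with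
          | last =>
            exfalso
            simp only [Fin.val_last, Fin.coe_castSucc] at hij
            omega
          | cast j =>
            rw [hPdef, corner_cc]
            exact hp'u i j (by simpa using hij)
      · intro i
        induction i using Fin.lastCases with
        | last => rw [hPdef, corner_ll]
        | cast i => rw [hPdef, corner_cc]; exact hp'd i
    set M₁ : Matrix (Fin (m + 1)) (Fin (m + 1)) k := corner (Matrix.diagonal t) e α
      with hM₁def
    have hPa : P * a = M₁ * P := by
      rw [hacorner, hPdef, hM₁def, corner_mul, corner_mul, hp'e]
      simp only [smul_zero, add_zero, Matrix.mulVec_zero, zero_add, one_smul, one_mul,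
        mul_one]
      rfl
    have hDM₁ : Dz M₁ := dz_of_mul_eq' hDa hPu hPa.symm
    have hsub1 : M₁ - α • 1 = corner (Matrix.diagonal (fun i => t i - α)) e 0 := by
      rw [hM₁def, corner_one, corner_smul, corner_sub, ← diagonal_sub_smul_one]
      simp [Matrix.smul_one_eq_diagonal]
    have h0 : ∀ i, t i = α → e i = 0 := by
      intro i0 hi0
      set v : Fin m → k := fun i => if t i = α then 0 else -(e i) / (t i - α) with hvdef
      have hv1 : (Matrix.diagonal (fun i => t i - α)).mulVec v + (1 : k) • e
          = fun i => if t i = α then e i else 0 := by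
        funext i
        simp only [Pi.add_apply, Matrix.mulVec_diagonal, one_smul]
        rcases eq_or_ne (t i) α with h | h
        · simp [hvdef, h]
        · have hne : t i - α ≠ 0 := sub_ne_zero.mpr h
          simp only [hvdef, if_neg h]
          rw [mul_comm, div_mul_cancel₀ _ hne, neg_add_cancel]
      have hw : (M₁ - α • 1).mulVec (Fin.snoc v 1)
          = Fin.snoc (fun i => if t i = α then e i else 0) 0 := by
        rw [hsub1, corner_mulVec, hv1, zero_mul]
      have hv2 : (Matrix.diagonal (fun i => t i - α)).mulVec
            (fun i => if t i = α then e i else 0) + (0 : k) • e = 0 := by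
        funext i
        simp only [Pi.add_apply, Matrix.mulVec_diagonal, zero_smul, Pi.zero_apply, add_zero]
        rcases eq_or_ne (t i) α with h | h
        · rw [h, sub_self, zero_mul]
        · rw [if_neg h, mul_zero]
      have h2 : (M₁ - α • 1).mulVec ((M₁ - α • 1).mulVec (Fin.snoc v 1)) = 0 := by
        rw [hw, hsub1, corner_mulVec, hv2, zero_mul, snoc_zero]
      have h3 := hDM₁ α (Fin.snoc v 1) h2
      rw [hw] at h3
      have := congrFun h3 i0.castSucc
      simpa [hi0] using this
    set w : Fin m → k := fun i => if t i = α then 0 else e i / (t i - α) with hwdef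
    refine ⟨corner p' w 1, ?_, ?_, ?_⟩
    · intro i j hij
      induction i using Fin.lastCases with
      | last =>
        induction j using Fin.lastCases with
        | last => simp at hij
        | cast j => rw [corner_lc]
      | cast i =>
        induction j using Fin.lastCases with
        | last =>
          exfalso
          simp only [Fin.val_last, Fin.coe_castSucc] at hij
          omega
        | cast j =>
          rw [corner_cc]
          exact hp'u i j (by simpa using hij)
    · intro i
      induction i using Fin.lastCases with
      | last => rw [corner_ll]
      | cast i => rw [corner_cc]; exact hp'd i
    · have hdiagstep : Matrix.diagonal (fun i : Fin (m + 1) => a i i)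
          = corner (Matrix.diagonal t) 0 α := by
        rw [diagonal_corner]
        rfl
      have harg : e + α • w = (Matrix.diagonal t).mulVec w := by
        funext i
        simp only [Pi.add_apply, Pi.smul_apply, smul_eq_mul, Matrix.mulVec_diagonal]
        rcases eq_or_ne (t i) α with h | h
        · have hw0 : w i = 0 := by simp only [hwdef]; rw [if_pos h]
          rw [hw0, mul_zero, mul_zero, add_zero]
          exact h0 i h
        · have hwv : w i = e i / (t i - α) := by simp only [hwdef]; rw [if_neg h]
          have hne : t i - α ≠ 0 := sub_ne_zero.mpr h
          rw [hwv]
          field_simp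
          ring
      rw [hdiagstep]
      conv_lhs => rw [hacorner]
      rw [corner_mul, corner_mul, hp'e, ← hedef, harg]
      simp only [smul_zero, add_zero, one_smul, zero_add, one_mul, mul_one]

lemma fromBlocks_sub_smul_one {l m : Type*} [Fintype l] [Fintype m]
    [DecidableEq l] [DecidableEq m]
    (A : Matrix l l k) (B : Matrix l m k) (C : Matrix m l k) (D : Matrix m m k) (α : k) :
    Matrix.fromBlocks A B C D - α • (1 : Matrix (l ⊕ m) (l ⊕ m) k)
      = Matrix.fromBlocks (A - α • 1) B C (D - α • 1) := by
  simp only [sub_eq_add_neg, ← Matrix.fromBlocks_one, Matrix.fromBlocks_smul, smul_zero,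
    Matrix.fromBlocks_neg, neg_zero, Matrix.fromBlocks_add, add_zero]


end Aux


/-- Every diagonalizable (semisimple) element of the Borel subalgebra
`𝔟 = {[[a,b],[0,aᵀ]] : a upper triangular, bᵀ = b}` is conjugate to an element of
`𝔱 = {diag(t₁,…,tₙ,t₁,…,tₙ)}` by an element of the Borel subgroup
`B = {g ∈ Sp_{2n}(k) : g = [[p,q],[0,r]], p upper triangular}`. -/
theorem stmt_10 (k : Type) [Field k] [IsAlgClosed k] [CharP k 2] (n : ℕ) (hn : 1 ≤ n)
    (x : Matrix (Fin n ⊕ Fin n) (Fin n ⊕ Fin n) k)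
    (hxb : ∃ a b : Matrix (Fin n) (Fin n) k,
      (∀ i j : Fin n, (j : ℕ) < (i : ℕ) → a i j = 0) ∧ bᵀ = b ∧
      x = Matrix.fromBlocks a b 0 aᵀ)
    (hdiag : ∃ u : Matrix (Fin n ⊕ Fin n) (Fin n ⊕ Fin n) k, IsUnit u ∧
      ∃ d : Fin n ⊕ Fin n → k, u * x * u⁻¹ = Matrix.diagonal d) :
    ∃ g : Matrix (Fin n ⊕ Fin n) (Fin n ⊕ Fin n) k,
      (IsUnit g ∧ gᵀ * Jsp k n * g = Jsp k n ∧
        ∃ p q r : Matrix (Fin n) (Fin n) k,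
          (∀ i j : Fin n, (j : ℕ) < (i : ℕ) → p i j = 0) ∧
          g = Matrix.fromBlocks p q 0 r) ∧
      ∃ t : Fin n → k,
        g * x * g⁻¹ = Matrix.fromBlocks (Matrix.diagonal t) 0 0 (Matrix.diagonal t) := by
  classical
  obtain ⟨a, b, hau, hbs, hxab⟩ := hxb
  obtain ⟨u, hu, d, hud⟩ := hdiag
  have hudet := (Matrix.isUnit_iff_isUnit_det u).mp hu
  have hDx : Dz x := by
    apply dz_of_mul_eq (dz_diagonal d) hu
    have h1 : u * x * u⁻¹ * u = Matrix.diagonal d * u := by rw [hud]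
    rwa [Matrix.mul_assoc (u * x), Matrix.nonsing_inv_mul u hudet, Matrix.mul_one] at h1
  have helim0 : (Sum.elim (0 : Fin n → k) (0 : Fin n → k)) = 0 := by
    funext s; cases s <;> rfl
  have hDa : Dz a := by
    intro α v hv
    have hxsub : x - α • 1 = Matrix.fromBlocks (a - α • 1) b 0 (aᵀ - α • 1) := by
      rw [hxab, fromBlocks_sub_smul_one]
    have lift : ∀ w : Fin n → k,
        (x - α • 1).mulVec (Sum.elim w 0) = Sum.elim ((a - α • 1).mulVec w) 0 := by
      intro w
      rw [hxsub, Matrix.fromBlocks_mulVec]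
      simp
    have h2 : (x - α • 1).mulVec ((x - α • 1).mulVec (Sum.elim v 0)) = 0 := by
      rw [lift v, lift _, hv, helim0]
    have h3 := hDx α (Sum.elim v 0) h2
    rw [lift v] at h3
    funext i
    exact congrFun h3 (Sum.inl i)
  obtain ⟨p, hpu, hpd, hpe⟩ := tri_diag n a hau hDa
  have hp : IsUnit p := isUnit_of_uppertri p hpu hpd
  have hpdet := (Matrix.isUnit_iff_isUnit_det p).mp hp
  have hpp1 : p * p⁻¹ = 1 := Matrix.mul_nonsing_inv p hpdet
  have hpp2 : p⁻¹ * p = 1 := Matrix.nonsing_inv_mul p hpdet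
  set t : Fin n → k := fun i => a i i with htdef
  set D : Matrix (Fin n) (Fin n) k := Matrix.diagonal t with hDdef
  set B : Matrix (Fin n) (Fin n) k := p * b * pᵀ with hBdef
  have hBsym : Bᵀ = B := by
    rw [hBdef, Matrix.transpose_mul, Matrix.transpose_mul, Matrix.transpose_transpose, hbs,
      Matrix.mul_assoc]
  set g1 : Matrix (Fin n ⊕ Fin n) (Fin n ⊕ Fin n) k := Matrix.fromBlocks p 0 0 p⁻¹ᵀ
    with hg1def
  set i1 : Matrix (Fin n ⊕ Fin n) (Fin n ⊕ Fin n) k := Matrix.fromBlocks p⁻¹ 0 0 pᵀ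
    with hi1def
  have htp1 : pᵀ * p⁻¹ᵀ = 1 := by rw [← Matrix.transpose_mul, hpp2, Matrix.transpose_one]
  have htp2 : p⁻¹ᵀ * pᵀ = 1 := by rw [← Matrix.transpose_mul, hpp1, Matrix.transpose_one]
  have hg1i1 : g1 * i1 = 1 := by
    rw [hg1def, hi1def, Matrix.fromBlocks_multiply]
    simp only [Matrix.mul_zero, Matrix.zero_mul, add_zero, zero_add, hpp1,
      Matrix.transpose_one, htp1, htp2, Matrix.fromBlocks_one]
  have hi1g1 : i1 * g1 = 1 := by
    rw [hg1def, hi1def, Matrix.fromBlocks_multiply]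
    simp only [Matrix.mul_zero, Matrix.zero_mul, add_zero, zero_add, hpp2,
      Matrix.transpose_one, htp1, htp2, Matrix.fromBlocks_one]
  have hg1unit : IsUnit g1 := by
    rw [Matrix.isUnit_iff_isUnit_det]
    exact IsUnit.of_mul_eq_one i1.det (by rw [← Matrix.det_mul, hg1i1, Matrix.det_one])
  have hpap : p * a * p⁻¹ = D := by
    rw [hpe, Matrix.mul_assoc, hpp1, Matrix.mul_one]
  have hpat : p⁻¹ᵀ * aᵀ * pᵀ = D := by
    have h1 : p⁻¹ᵀ * aᵀ * pᵀ = (p * (a * p⁻¹))ᵀ := by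
      rw [Matrix.transpose_mul, Matrix.transpose_mul, Matrix.mul_assoc]
    rw [h1, ← Matrix.mul_assoc, hpap, hDdef, Matrix.diagonal_transpose]
  set x1 : Matrix (Fin n ⊕ Fin n) (Fin n ⊕ Fin n) k := Matrix.fromBlocks D B 0 D with hx1def
  have hx1 : g1 * x * i1 = x1 := by
    rw [hxab, hg1def, hi1def, Matrix.fromBlocks_multiply, Matrix.fromBlocks_multiply]
    simp only [Matrix.mul_zero, Matrix.zero_mul, add_zero, zero_add]
    rw [hpap, hpat, hx1def, hBdef]
  have hx1g1 : x1 * g1 = g1 * x := by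
    calc x1 * g1 = g1 * x * i1 * g1 := by rw [hx1]
      _ = g1 * x * (i1 * g1) := by rw [Matrix.mul_assoc]
      _ = g1 * x := by rw [hi1g1, Matrix.mul_one]
  have hDzx1 : Dz x1 := dz_of_mul_eq' hDx hg1unit hx1g1
  have hB0 : ∀ i j, t i = t j → B i j = 0 := by
    intro i0 j hij
    set α := t j with hαdef
    set v : Fin n → k := fun i => if t i = α then 0 else -(B i j) / (t i - α) with hvdef
    have hx1sub : x1 - α • 1
        = Matrix.fromBlocks (Matrix.diagonal fun i => t i - α) B 0
            (Matrix.diagonal fun i => t i - α) := by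
      rw [hx1def, fromBlocks_sub_smul_one, hDdef, diagonal_sub_smul_one]
    have hw1 : (Matrix.diagonal fun i => t i - α).mulVec v + B.mulVec (Pi.single j 1)
        = fun i => if t i = α then B i j else 0 := by
      funext i
      simp only [Pi.add_apply, Matrix.mulVec_diagonal, Matrix.mulVec_single_one, Matrix.col_apply, mul_one]
      rcases eq_or_ne (t i) α with h | h
      · simp [hvdef, h]
      · have hne : t i - α ≠ 0 := sub_ne_zero.mpr h
        simp only [hvdef, if_neg h]
        rw [mul_comm, div_mul_cancel₀ _ hne, neg_add_cancel]
    have hw2 : (Matrix.diagonal fun i => t i - α).mulVec (Pi.single j (1 : k)) = 0 := by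
      rw [Matrix.diagonal_mulVec_single]
      rw [hαdef, sub_self, zero_mul]
      exact Pi.single_zero j
    have hstep1 : (x1 - α • 1).mulVec (Sum.elim v (Pi.single j 1))
        = Sum.elim (fun i => if t i = α then B i j else 0) 0 := by
      rw [hx1sub, Matrix.fromBlocks_mulVec, Sum.elim_comp_inl, Sum.elim_comp_inr, hw1, hw2]
      simp
    have hstep2 : (x1 - α • 1).mulVec ((x1 - α • 1).mulVec (Sum.elim v (Pi.single j 1)))
        = 0 := by
      rw [hstep1, hx1sub, Matrix.fromBlocks_mulVec, Sum.elim_comp_inl, Sum.elim_comp_inr]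
      have hcol : (Matrix.diagonal fun i => t i - α).mulVec
          (fun i => if t i = α then B i j else 0) = 0 := by
        funext i
        simp only [Matrix.mulVec_diagonal, Pi.zero_apply]
        rcases eq_or_ne (t i) α with h | h
        · rw [h, sub_self, zero_mul]
        · rw [if_neg h, mul_zero]
      rw [hcol]
      simp [helim0]
    have h3 := hDzx1 α (Sum.elim v (Pi.single j 1)) hstep2
    rw [hstep1] at h3
    have h4 := congrFun h3 (Sum.inl i0)
    simpa [hij] using h4
  set Q : Matrix (Fin n) (Fin n) k :=
    Matrix.of fun i j => if t i = t j then 0 else B i j / (t i - t j) with hQdef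
  have hQB : D * Q - Q * D = B := by
    ext i j
    simp only [Matrix.sub_apply, hDdef, Matrix.diagonal_mul, Matrix.mul_diagonal, hQdef,
      Matrix.of_apply]
    rcases eq_or_ne (t i) (t j) with h | h
    · rw [if_pos h, mul_zero, zero_mul, sub_zero]
      exact (hB0 i j h).symm
    · have hne : t i - t j ≠ 0 := sub_ne_zero.mpr h
      rw [if_neg h]
      field_simp
  have hQskew : Qᵀ = -Q := by
    ext i j
    simp only [Matrix.transpose_apply, Matrix.neg_apply, hQdef, Matrix.of_apply]
    rcases eq_or_ne (t i) (t j) with h | h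
    · rw [if_pos h, if_pos h.symm, neg_zero]
    · rw [if_neg h, if_neg (Ne.symm h)]
      have hBji : B j i = B i j := congrFun (congrFun hBsym i) j
      rw [hBji, ← neg_sub (t i) (t j), div_neg]
  set g2 : Matrix (Fin n ⊕ Fin n) (Fin n ⊕ Fin n) k := Matrix.fromBlocks 1 Q 0 1 with hg2def
  set i2 : Matrix (Fin n ⊕ Fin n) (Fin n ⊕ Fin n) k := Matrix.fromBlocks 1 (-Q) 0 1
    with hi2def
  have hg2i2 : g2 * i2 = 1 := by
    rw [hg2def, hi2def, Matrix.fromBlocks_multiply]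
    simp only [Matrix.mul_zero, Matrix.zero_mul, add_zero, zero_add, Matrix.one_mul,
      Matrix.mul_one]
    rw [neg_add_cancel]
    exact Matrix.fromBlocks_one
  have hi2g2 : i2 * g2 = 1 := by
    rw [hg2def, hi2def, Matrix.fromBlocks_multiply]
    simp only [Matrix.mul_zero, Matrix.zero_mul, add_zero, zero_add, Matrix.one_mul,
      Matrix.mul_one]
    rw [add_neg_cancel]
    exact Matrix.fromBlocks_one
  have hg2unit : IsUnit g2 := by
    rw [Matrix.isUnit_iff_isUnit_det]
    exact IsUnit.of_mul_eq_one i2.det (by rw [← Matrix.det_mul, hg2i2, Matrix.det_one])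
  have hx2 : g2 * x1 * i2 = Matrix.fromBlocks D 0 0 D := by
    rw [hx1def, hg2def, hi2def, Matrix.fromBlocks_multiply, Matrix.fromBlocks_multiply]
    simp only [Matrix.mul_zero, Matrix.zero_mul, add_zero, zero_add, Matrix.one_mul,
      Matrix.mul_one]
    have hTR : D * -Q + (B + Q * D) = 0 := by
      rw [← hQB, Matrix.mul_neg]
      abel
    rw [hTR]
  set g : Matrix (Fin n ⊕ Fin n) (Fin n ⊕ Fin n) k := g2 * g1 with hgdef
  set gi : Matrix (Fin n ⊕ Fin n) (Fin n ⊕ Fin n) k := i1 * i2 with hgidef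
  have hggi : g * gi = 1 := by
    calc g2 * g1 * (i1 * i2) = g2 * (g1 * i1) * i2 := by simp only [Matrix.mul_assoc]
      _ = 1 := by rw [hg1i1, Matrix.mul_one, hg2i2]
  have hginv : g⁻¹ = gi := Matrix.inv_eq_right_inv hggi
  have hgunit : IsUnit g := hg2unit.mul hg1unit
  have hJ : Jsp k n = Matrix.fromBlocks 0 1 1 0 := rfl
  have hJ1 : g1ᵀ * Jsp k n * g1 = Jsp k n := by
    have h1 : pᵀ * p⁻¹ᵀ = 1 := by rw [← Matrix.transpose_mul, hpp2, Matrix.transpose_one]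
    rw [hJ, hg1def, Matrix.fromBlocks_transpose, Matrix.fromBlocks_multiply,
      Matrix.fromBlocks_multiply]
    simp only [Matrix.transpose_zero, Matrix.transpose_transpose, Matrix.mul_zero,
      Matrix.zero_mul, add_zero, zero_add, Matrix.one_mul, Matrix.mul_one, h1, hpp2,
      Matrix.fromBlocks_one]
  have hJ2 : g2ᵀ * Jsp k n * g2 = Jsp k n := by
    rw [hJ, hg2def, Matrix.fromBlocks_transpose, Matrix.fromBlocks_multiply,
      Matrix.fromBlocks_multiply]
    simp only [Matrix.transpose_zero, Matrix.transpose_one, Matrix.mul_zero,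
      Matrix.zero_mul, add_zero, zero_add, Matrix.one_mul, Matrix.mul_one, hQskew,
      add_neg_cancel]
  have hJg : gᵀ * Jsp k n * g = Jsp k n := by
    have h1 : gᵀ * Jsp k n * g = g1ᵀ * (g2ᵀ * Jsp k n * g2) * g1 := by
      rw [hgdef, Matrix.transpose_mul]
      simp only [Matrix.mul_assoc]
    rw [h1, hJ2, hJ1]
  have hgblocks : g = Matrix.fromBlocks p (Q * p⁻¹ᵀ) 0 p⁻¹ᵀ := by
    rw [hgdef, hg2def, hg1def, Matrix.fromBlocks_multiply]
    simp only [Matrix.mul_zero, Matrix.zero_mul, add_zero, zero_add, Matrix.one_mul,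
      Matrix.mul_one]
  have hfinal : g * x * g⁻¹ = Matrix.fromBlocks D 0 0 D := by
    rw [hginv, hgidef, hgdef]
    calc g2 * g1 * x * (i1 * i2) = g2 * (g1 * x * i1) * i2 := by
          simp only [Matrix.mul_assoc]
      _ = g2 * x1 * i2 := by rw [hx1]
      _ = Matrix.fromBlocks D 0 0 D := hx2
  exact ⟨g, ⟨hgunit, hJg, p, Q * p⁻¹ᵀ, p⁻¹ᵀ, hpu, hgblocks⟩, t, hfinal⟩
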